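/- arXiv:1003.1484 — 3 statements merged into one kernel-verified Lean document; each statement's English description precedes it below -/
import Mathlib

section
/- In a locally elliptic locally compact group (every finite subset generates a relatively compact subgroup), every compact subset is contained in a compact open subgroup; consequently a non-compact locally elliptic locally compact group is not compactly generated. -/
open scoped Pointwise


/-- In a locally elliptic locally compact group (every finite subset
topologically generates a compact subgroup), every compact subset is contained in a compact
open subgroup; consequently, if the group is compactly generated then it is compact (so a
non-compact locally elliptic locally compact group is not compactly generated). -/
theorem stmt_15 {N : Type*} [Group N] [TopologicalSpace N] [IsTopologicalGroup N]
    [LocallyCompactSpace N]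
    (hle : ∀ S : Set N, S.Finite →
      IsCompact (((Subgroup.closure S).topologicalClosure : Subgroup N) : Set N)) :
    (∀ S : Set N, IsCompact S → ∃ K : Subgroup N,
        IsCompact (K : Set N) ∧ IsOpen (K : Set N) ∧ S ⊆ K) ∧
      ((∃ S : Set N, IsCompact S ∧ (Subgroup.closure S).topologicalClosure = ⊤) →
        CompactSpace N) := by
  have part1 : ∀ S : Set N, IsCompact S → ∃ K : Subgroup N,
      IsCompact (K : Set N) ∧ IsOpen (K : Set N) ∧ S ⊆ K := by
    intro S hS
    obtain ⟨W, hWc, hWn⟩ := exists_compact_mem_nhds (1 : N)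
    set A : Set N := W ∪ S ∪ {1} with hA
    set V : Set N := A ∪ A⁻¹ with hV
    have hAc : IsCompact A := (hWc.union hS).union isCompact_singleton
    have hVc : IsCompact V := hAc.union hAc.inv
    have hVsymm : V⁻¹ = V := by
      simp [hV, Set.union_inv, Set.union_comm]
    have hWV : W ⊆ V := fun x hx => Set.mem_union_left _ (Set.mem_union_left _
      (Set.mem_union_left _ hx))
    have hSV : S ⊆ V := fun x hx => Set.mem_union_left _ (Set.mem_union_left _
      (Set.mem_union_right _ hx))
    have hVn : V ∈ nhds (1 : N) := Filter.mem_of_superset hWn hWV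
    have h1V : (1 : N) ∈ V := mem_of_mem_nhds hVn
    have h1int : (1 : N) ∈ interior V := mem_interior_iff_mem_nhds.2 hVn
    have hVV : IsCompact (V * V) := hVc.mul hVc
    have hcover : V * V ⊆ ⋃ x : N, x • interior V := by
      intro y _
      exact Set.mem_iUnion.2 ⟨y, ⟨1, h1int, by simp⟩⟩
    obtain ⟨t, ht⟩ := hVV.elim_finite_subcover (fun x : N => x • interior V)
      (fun x => isOpen_interior.smul x) hcover
    set H : Subgroup N := (Subgroup.closure (↑t : Set N)).topologicalClosure with hH
    have hHc : IsCompact (H : Set N) := hle (↑t) t.finite_toSet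
    have htH : ∀ x ∈ t, x ∈ H := fun x hx =>
      Subgroup.le_topologicalClosure _ (Subgroup.subset_closure hx)
    have step : ∀ y ∈ (H : Set N) * V, ∀ a ∈ V, y * a ∈ (H : Set N) * V := by
      rintro y ⟨h, hh, v, hv, rfl⟩ a ha
      have hva : v * a ∈ V * V := Set.mul_mem_mul hv ha
      obtain ⟨x, hxt, hxm⟩ := Set.mem_iUnion₂.1 (ht hva)
      obtain ⟨v', hv', hx'⟩ := hxm
      refine ⟨h * x, H.mul_mem hh (htH x hxt), v', interior_subset hv', ?_⟩
      simp only [smul_eq_mul] at hx'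
      show h * x * v' = h * v * a
      rw [mul_assoc h v a, ← hx', mul_assoc]
    have key : ∀ l : List N, (∀ y ∈ l, y ∈ V) → l.prod ∈ (H : Set N) * V := by
      intro l
      induction l using List.reverseRecOn with
      | nil => exact fun _ => ⟨1, H.one_mem, 1, h1V, mul_one 1⟩
      | append_singleton l a ih =>
        intro hmem
        rw [List.prod_append, List.prod_singleton]
        exact step _ (ih fun y hy => hmem y (by simp [hy])) a (hmem a (by simp))
    have hsub : ((Subgroup.closure V : Subgroup N) : Set N) ⊆ (H : Set N) * V := by
      intro g hg
      have hg' : g ∈ Submonoid.closure V := by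
        have := Subgroup.closure_toSubmonoid V
        rw [hVsymm, Set.union_self] at this
        rw [← this]
        exact hg
      obtain ⟨l, hl, rfl⟩ := Submonoid.exists_list_of_mem_closure hg'
      exact key l hl
    have hopen : IsOpen ((Subgroup.closure V : Subgroup N) : Set N) :=
      Subgroup.isOpen_of_mem_nhds _
        (Filter.mem_of_superset hVn Subgroup.subset_closure)
    have hclosed : IsClosed ((Subgroup.closure V : Subgroup N) : Set N) :=
      (Subgroup.closure V).isClosed_of_isOpen hopen
    have hcomp : IsCompact ((Subgroup.closure V : Subgroup N) : Set N) :=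
      (hHc.mul hVc).of_isClosed_subset hclosed hsub
    exact ⟨Subgroup.closure V, hcomp, hopen,
      fun x hx => Subgroup.subset_closure (hSV hx)⟩
  refine ⟨part1, ?_⟩
  rintro ⟨S, hS, htop⟩
  obtain ⟨K, hKc, hKo, hSK⟩ := part1 S hS
  have hKclosed : IsClosed (K : Set N) := K.isClosed_of_isOpen hKo
  have hle' : Subgroup.closure S ≤ K := (Subgroup.closure_le K).2 hSK
  have h2 : (Subgroup.closure S).topologicalClosure ≤ K :=
    Subgroup.topologicalClosure_minimal _ hle' hKclosed
  rw [htop] at h2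
  have hKtop : K = ⊤ := top_le_iff.1 h2
  have : IsCompact (Set.univ : Set N) := by
    have : (K : Set N) = Set.univ := by rw [hKtop]; rfl
    rwa [this] at hKc
  exact isCompact_univ_iff.1 this
end

section
/- Let H be an open subgroup of a locally compact group G. Every continuous positive definite function φ on H extends to a continuous positive definite function on G, by setting it equal to 0 outside H. -/
open scoped ComplexOrder Classical

/-- A function `φ : G → ℂ` on a group is positive definite if all the Gram-type sums
`∑ i j, c i * conj (c j) * φ ((g j)⁻¹ * g i)` are non-negative. -/
def IsPosDefFn {G : Type*} [Group G] (φ : G → ℂ) : Prop :=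
  ∀ (n : ℕ) (g : Fin n → G) (c : Fin n → ℂ),
    0 ≤ ∑ i, ∑ j, c i * (starRingEnd ℂ) (c j) * φ ((g j)⁻¹ * g i)

/-- Let `H` be an open subgroup of a topological group `G`. Every continuous
positive definite function `φ` on `H` extends to a continuous positive definite function on
`G` by setting it equal to `0` outside `H`. -/
theorem stmt_16 {G : Type*} [Group G] [TopologicalSpace G] [IsTopologicalGroup G]
    (H : Subgroup G) (hH : IsOpen (H : Set G)) (φ : ↥H → ℂ)
    (hφc : Continuous φ) (hφ : IsPosDefFn φ) :
    IsPosDefFn (fun g : G => if h : g ∈ H then φ ⟨g, h⟩ else 0) ∧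
      Continuous (fun g : G => if h : g ∈ H then φ ⟨g, h⟩ else 0) := by
  classical
  set ψ : G → ℂ := fun g : G => if h : g ∈ H then φ ⟨g, h⟩ else 0 with hψdef
  constructor
  · intro n g c
    set q : G → G ⧸ H := QuotientGroup.mk with hq
    have hd : ∀ i, (Quotient.out (q (g i)))⁻¹ * g i ∈ H := by
      intro i
      have h1 : QuotientGroup.mk (Quotient.out (q (g i))) = q (g i) :=
        QuotientGroup.out_eq' (q (g i))
      exact QuotientGroup.eq.mp h1
    set d : Fin n → ↥H := fun i => ⟨_, hd i⟩ with hddef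
    set T : Finset (G ⧸ H) := Finset.univ.image (fun i => q (g i)) with hT
    have key : ∀ i j, c i * (starRingEnd ℂ) (c j) * ψ ((g j)⁻¹ * g i) =
        ∑ x ∈ T, (if q (g i) = x then c i else 0) *
          (starRingEnd ℂ) (if q (g j) = x then c j else 0) * φ ((d j)⁻¹ * d i) := by
      intro i j
      rw [Finset.sum_eq_single_of_mem (q (g i))
        (Finset.mem_image.mpr ⟨i, Finset.mem_univ i, rfl⟩)]
      · simp only [if_pos rfl]
        by_cases hij : q (g j) = q (g i)
        · rw [if_pos hij]
          have hmem : (g j)⁻¹ * g i ∈ H := QuotientGroup.eq.mp hij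
          have harg : ((d j)⁻¹ * d i : ↥H) = ⟨(g j)⁻¹ * g i, hmem⟩ := by
            ext
            simp only [hddef, Subgroup.coe_mul, InvMemClass.coe_inv, mul_inv_rev, inv_inv, hij]
            group
          rw [harg]
          simp only [hψdef, dif_pos hmem, if_true]
        · rw [if_neg hij]
          have hmem : (g j)⁻¹ * g i ∉ H := fun h => hij (QuotientGroup.eq.mpr h)
          simp [hψdef, dif_neg hmem]
      · intro x hx hxne
        rw [if_neg (fun h => hxne h.symm)]
        ring
    calc (0 : ℂ) ≤ ∑ x ∈ T, ∑ i, ∑ j, (if q (g i) = x then c i else 0) *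
          (starRingEnd ℂ) (if q (g j) = x then c j else 0) * φ ((d j)⁻¹ * d i) := by
          apply Finset.sum_nonneg
          intro x _
          exact hφ n d (fun i => if q (g i) = x then c i else 0)
      _ = ∑ i, ∑ j, c i * (starRingEnd ℂ) (c j) * ψ ((g j)⁻¹ * g i) := by
          rw [Finset.sum_comm]
          refine Finset.sum_congr rfl fun i _ => ?_
          rw [Finset.sum_comm]
          refine Finset.sum_congr rfl fun j _ => (key i j).symm
  · rw [continuous_iff_continuousAt]
    intro x
    by_cases hx : x ∈ H
    · have hco : ContinuousOn ψ (H : Set G) := by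
        rw [continuousOn_iff_continuous_restrict]
        have : (H : Set G).domRestrict ψ = φ := by
          funext y
          simp [hψdef, y.2]
        rw [this]
        exact hφc
      exact hco.continuousAt (hH.mem_nhds hx)
    · have hcl : IsClosed (H : Set G) := Subgroup.isClosed_of_isOpen H hH
      have hmem : (H : Set G)ᶜ ∈ nhds x := hcl.isOpen_compl.mem_nhds hx
      have heq : ψ =ᶠ[nhds x] (fun _ => 0) := by
        filter_upwards [hmem] with y hy
        exact dif_neg hy
      exact (continuousAt_const (y := (0:ℂ))).congr heq.symm
end

section
/- Let G be a locally compact group, N a closed normal subgroup, χ a continuous unitary character of N, and π_χ = Ind_N^G χ the induced representation. Then π_χ has a non-zero N-invariant vector if and only if χ is the trivial character. -/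
open scoped Pointwise

/-- Let `G` be a locally compact second countable group, `N` a closed normal
subgroup, `χ` a continuous unitary character of `N`, and `π_χ = Ind_N^G χ` the induced
representation, acting by left translation on the measurable functions `f : G → ℂ` with
`f (g n) = χ(n)⁻¹ f g` which are square-integrable modulo `N`. Then `π_χ` has a non-zero
`N`-invariant vector if and only if `χ` is the trivial character. -/
theorem stmt_18 {G : Type*} [Group G] [TopologicalSpace G] [IsTopologicalGroup G]
    [LocallyCompactSpace G] [SecondCountableTopology G] [MeasurableSpace G] [BorelSpace G]
    (N : Subgroup G) [N.Normal] (hNcl : IsClosed (N : Set G))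
    [MeasurableSpace (G ⧸ N)] [BorelSpace (G ⧸ N)]
    (μ : MeasureTheory.Measure (G ⧸ N)) [μ.IsHaarMeasure]
    (χ : ↥N →* Circle) (hχ : Continuous χ) :
    (∃ f : G → ℂ, Measurable f ∧ f ≠ 0 ∧
        (∀ (g : G) (n : ↥N), f (g * n) = ((χ n : ℂ))⁻¹ * f g) ∧
        (∃ F : G ⧸ N → ℝ, (∀ g : G, F (QuotientGroup.mk g) = ‖f g‖ ^ 2) ∧
          MeasureTheory.Integrable F μ) ∧
        (∀ (n : ↥N) (g : G), f ((n : G)⁻¹ * g) = f g)) ↔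
      χ = 1 := by
  constructor
  · rintro ⟨f, hmeas, hne, heq, -, hinv⟩
    obtain ⟨g, hg⟩ : ∃ g, f g ≠ 0 := by
      by_contra h
      push_neg at h
      exact hne (funext h)
    ext n
    have hmN : (g * (n : G) * g⁻¹) ∈ N :=
      (inferInstance : N.Normal).conj_mem _ n.2 g
    have h1 : f ((g * (n : G) * g⁻¹) * g) = f g := by
      have := hinv ⟨g * (n : G) * g⁻¹, hmN⟩⁻¹ g
      simpa using this
    have h2 : (g * (n : G) * g⁻¹) * g = g * (n : G) := by group
    rw [h2, heq g n] at h1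
    have hχ1 : ((χ n : ℂ))⁻¹ = 1 := by
      have := mul_right_cancel₀ hg (h1.trans (one_mul (f g)).symm)
      exact this
    have hcoe : (χ n : ℂ) = 1 := by
      have := congrArg Inv.inv hχ1
      simpa using this
    simpa using hcoe
  · rintro rfl
    obtain ⟨K, hKc, hK1⟩ : ∃ K : Set G, IsCompact K ∧ K ∈ nhds (1 : G) := by
      obtain ⟨K, hK, hK1⟩ := local_compact_nhds (x := (1 : G)) (n := Set.univ)
        Filter.univ_mem
      exact ⟨K, hK1.2, hK⟩
    set S : Set G := (QuotientGroup.mk : G → G ⧸ N) ⁻¹' (QuotientGroup.mk '' K) with hS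
    have hSclosed : IsClosed S := by
      have hSeq : S = K * (N : Set G) := by
        ext g
        constructor
        · rintro ⟨k, hk, hkg⟩
          rw [QuotientGroup.eq] at hkg
          exact ⟨k, hk, k⁻¹ * g, hkg, by group⟩
        · rintro ⟨k, hk, n, hn, rfl⟩
          exact ⟨k, hk, (QuotientGroup.eq (a := k) (b := k * n)).mpr (by simpa using hn)⟩
      rw [hSeq]
      exact hNcl.mul_left_of_isCompact hKc
    have hTclosed : IsClosed ((QuotientGroup.mk : G → G ⧸ N) '' K) := by
      rw [← isOpen_compl_iff]
      have himg : ((QuotientGroup.mk : G → G ⧸ N) '' K)ᶜ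
          = (QuotientGroup.mk : G → G ⧸ N) '' Sᶜ := by
        ext x
        obtain ⟨g, rfl⟩ := QuotientGroup.mk_surjective x
        constructor
        · intro hx
          exact ⟨g, fun hgS => hx hgS, rfl⟩
        · rintro ⟨g', hg', hgg'⟩ hx
          refine hg' ?_
          show g' ∈ S
          rw [hS, Set.mem_preimage, hgg']
          exact hx
      rw [himg]
      exact QuotientGroup.isOpenMap_coe Sᶜ hSclosed.isOpen_compl
    have hTcompact : IsCompact ((QuotientGroup.mk : G → G ⧸ N) '' K) :=
      hKc.image continuous_quot_mk
    refine ⟨S.indicator (fun _ => (1 : ℂ)), ?_, ?_, ?_, ?_, ?_⟩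
    · exact (measurable_indicator_const_iff 1).mpr hSclosed.measurableSet
    · intro h
      have h1 : (1 : G) ∈ S := ⟨1, mem_of_mem_nhds hK1, rfl⟩
      have := congrFun h 1
      rw [Set.indicator_of_mem h1] at this
      exact one_ne_zero this
    · intro g n
      simp only [MonoidHom.one_apply, OneMemClass.coe_one, Circle.coe_one, inv_one, one_mul]
      have hq : QuotientGroup.mk (g * (n : G)) = (QuotientGroup.mk g : G ⧸ N) :=
        QuotientGroup.eq.mpr (by simp)
      have hmem : g * (n : G) ∈ S ↔ g ∈ S := by
        simp only [hS, Set.mem_preimage, hq]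
      by_cases hgS : g ∈ S
      · rw [Set.indicator_of_mem hgS, Set.indicator_of_mem (hmem.mpr hgS)]
      · rw [Set.indicator_of_notMem hgS,
          Set.indicator_of_notMem (fun h => hgS (hmem.mp h))]
    · refine ⟨((QuotientGroup.mk : G → G ⧸ N) '' K).indicator (fun _ => (1 : ℝ)), ?_, ?_⟩
      · intro g
        by_cases hgS : g ∈ S
        · rw [Set.indicator_of_mem hgS,
            Set.indicator_of_mem
              (show (QuotientGroup.mk g : G ⧸ N) ∈ QuotientGroup.mk '' K from hgS)]
          simp
        · rw [Set.indicator_of_notMem hgS,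
            Set.indicator_of_notMem
              (show (QuotientGroup.mk g : G ⧸ N) ∉ QuotientGroup.mk '' K from hgS)]
          simp
      · rw [MeasureTheory.integrable_indicator_iff hTclosed.measurableSet]
        exact MeasureTheory.integrableOn_const hTcompact.measure_lt_top.ne
    · intro n g
      have hq : QuotientGroup.mk ((n : G)⁻¹ * g) = (QuotientGroup.mk g : G ⧸ N) :=
        QuotientGroup.eq.mpr (by
          have h : ((n : G)⁻¹ * g)⁻¹ * g = g⁻¹ * ((n : G) * (g⁻¹)⁻¹) := by group
          rw [h]
          simpa [mul_assoc] using (inferInstance : N.Normal).conj_mem _ n.2 g⁻¹)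
      have hmem : (n : G)⁻¹ * g ∈ S ↔ g ∈ S := by
        simp only [hS, Set.mem_preimage, hq]
      by_cases hgS : g ∈ S
      · rw [Set.indicator_of_mem hgS, Set.indicator_of_mem (hmem.mpr hgS)]
      · rw [Set.indicator_of_notMem hgS,
          Set.indicator_of_notMem (fun h => hgS (hmem.mp h))]
end
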